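/- Let δ = d/dy on R = 𝕆[y] and T = R[x; id, δ]. Suppose a, b ∈ T commute, a has x-degree m > 0 with coefficients in ℝ[y] (leading coefficient a_m), and b ≠ 0 has x-degree n with leading coefficient b_n. Then m·a_m·δ(b_n) = n·b_n·δ(a_m), and hence m·deg_y(b_n) = n·deg_y(a_m), so deg_y(b_n) is uniquely determined. -/

import Mathlib

/-- The octonions, realized via the Cayley–Dickson doubling of the real quaternions. -/
def Octonion : Type := Quaternion ℝ × Quaternion ℝ

noncomputable instance : AddCommGroup Octonion :=
  inferInstanceAs (AddCommGroup (Quaternion ℝ × Quaternion ℝ))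

noncomputable instance : Module ℝ Octonion :=
  inferInstanceAs (Module ℝ (Quaternion ℝ × Quaternion ℝ))

/-- Cayley–Dickson multiplication on pairs of quaternions. -/
noncomputable def Octonion.omul (a b : Quaternion ℝ × Quaternion ℝ) :
    Quaternion ℝ × Quaternion ℝ :=
  (a.1 * b.1 - star b.2 * a.2, b.2 * a.1 + a.2 * star b.1)

noncomputable instance : One Octonion := ⟨((1 : Quaternion ℝ), (0 : Quaternion ℝ))⟩

theorem Octonion.omul_add (a b c : Quaternion ℝ × Quaternion ℝ) :
    Octonion.omul a (b + c) = Octonion.omul a b + Octonion.omul a c := by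
  unfold Octonion.omul
  refine Prod.ext ?_ ?_ <;>
    simp only [Prod.fst_add, Prod.snd_add, mul_add, add_mul, star_add] <;> abel

theorem Octonion.add_omul (a b c : Quaternion ℝ × Quaternion ℝ) :
    Octonion.omul (a + b) c = Octonion.omul a c + Octonion.omul b c := by
  unfold Octonion.omul
  refine Prod.ext ?_ ?_ <;>
    simp only [Prod.fst_add, Prod.snd_add, mul_add, add_mul, star_add] <;> abel

theorem Octonion.zero_omul (a : Quaternion ℝ × Quaternion ℝ) :
    Octonion.omul 0 a = 0 := by
  unfold Octonion.omul; refine Prod.ext ?_ ?_ <;> simp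

theorem Octonion.omul_zero (a : Quaternion ℝ × Quaternion ℝ) :
    Octonion.omul a 0 = 0 := by
  unfold Octonion.omul; refine Prod.ext ?_ ?_ <;> simp

noncomputable instance : NonUnitalNonAssocRing Octonion :=
  { (inferInstance : AddCommGroup Octonion) with
    mul := Octonion.omul
    left_distrib := fun a b c => Octonion.omul_add a b c
    right_distrib := fun a b c => Octonion.add_omul a b c
    zero_mul := fun a => Octonion.zero_omul a
    mul_zero := fun a => Octonion.omul_zero a }

/-- `R = 𝕆[y]`, the polynomial ring over the octonions, as finitely supported
sequences of octonion coefficients. -/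
noncomputable abbrev OctPoly : Type := ℕ →₀ Octonion

/-- The convolution product on `𝕆[y]`. -/
noncomputable instance : Mul OctPoly :=
  ⟨fun p q => p.sum fun i a => q.sum fun j b => Finsupp.single (i + j) (a * b)⟩

theorem OctPoly.mul_zero (a : OctPoly) : a * (0 : OctPoly) = 0 := by
  show (Finsupp.sum a fun i c => Finsupp.sum 0 fun j b => Finsupp.single (i + j) (c * b)) = 0
  simp

/-- The variable `y` of `𝕆[y]`. -/
noncomputable def Yv : OctPoly := Finsupp.single 1 (1 : Octonion)

/-- The constant polynomial `1` of `𝕆[y]`. -/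
noncomputable def oneR : OctPoly := Finsupp.single 0 (1 : Octonion)

/-- The `y`-degree of a polynomial in `𝕆[y]` (with junk value `0` at `0`). -/
def degy (r : OctPoly) : ℕ := WithBot.unbotD 0 (r.support.max)

/-- The underlying additive group of the Ore extension `S = R[x; σ, δ]`:
finitely supported sequences of coefficients in `R = 𝕆[y]`. -/
noncomputable abbrev OrePoly : Type := ℕ →₀ OctPoly

/-- Left multiplication by `x` in `R[x; σ, δ]`, determined by
`x·(r xʲ) = σ(r) x^(j+1) + δ(r) xʲ`. -/
noncomputable def xmul (σ δ : OctPoly →+ OctPoly) : OrePoly →+ OrePoly :=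
  Finsupp.liftAddHom fun j =>
    (Finsupp.singleAddHom (j + 1)).comp σ + (Finsupp.singleAddHom j).comp δ

/-- The multiplication of the non-associative Ore extension `R[x; σ, δ]`:
`(Σᵢ aᵢ xⁱ)·q = Σᵢ aᵢ·(xⁱ·q)`, where `xⁱ` acts via iterated `xmul` and `aᵢ`
multiplies every coefficient from the left. -/
noncomputable def oreMul (σ δ : OctPoly →+ OctPoly) (p q : OrePoly) : OrePoly :=
  p.sum fun i a => Finsupp.mapRange (a * ·) (OctPoly.mul_zero a) ((xmul σ δ)^[i] q)

/-- The constant `1 = 1·x⁰` of the Ore extension. -/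
noncomputable def oneS : OrePoly := Finsupp.single 0 oneR

/-- The `x`-degree of an element of the Ore extension, valued in `ℤ ∪ {-∞}`. -/
def xdeg (p : OrePoly) : WithBot ℤ := (p.support.max).map (Nat.cast : ℕ → ℤ)

/-- `σ` is a unital `ℝ`-algebra endomorphism of `𝕆[y]`. -/
def IsAlgEndo (σ : OctPoly →+ OctPoly) : Prop :=
  (∀ p q : OctPoly, σ (p * q) = σ p * σ q) ∧ σ oneR = oneR ∧
    (∀ (r : ℝ) (p : OctPoly), σ (r • p) = r • σ p)

/-- `δ` is a `σ`-derivation of `𝕆[y]`. -/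
def IsSigmaDerivation (σ δ : OctPoly →+ OctPoly) : Prop :=
  (∀ p q : OctPoly, δ (p * q) = σ p * δ q + δ p * q) ∧
    (∀ (r : ℝ) (p : OctPoly), δ (r • p) = r • δ p)

/-- An element of `𝕆` is real if it is a real multiple of `1`. -/
def Octonion.IsReal (c : Octonion) : Prop := ∃ r : ℝ, c = r • (1 : Octonion)

/-- Membership in the nucleus of the Ore extension `R[x; σ, δ]`. -/
def OreNucleus (σ δ : OctPoly →+ OctPoly) (a : OrePoly) : Prop :=
  (∀ b c : OrePoly, oreMul σ δ a (oreMul σ δ b c) = oreMul σ δ (oreMul σ δ a b) c) ∧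
  (∀ b c : OrePoly, oreMul σ δ (oreMul σ δ b a) c = oreMul σ δ b (oreMul σ δ a c)) ∧
  (∀ b c : OrePoly, oreMul σ δ (oreMul σ δ b c) a = oreMul σ δ b (oreMul σ δ c a))

/-- The identity endomorphism of `𝕆[y]`. -/
noncomputable def idR : OctPoly →+ OctPoly := AddMonoidHom.id OctPoly

/-- The usual `y`-derivative `d/dy` on `𝕆[y]`: `c·yʲ ↦ (j·c)·y^(j-1)`. -/
noncomputable def derivR : OctPoly →+ OctPoly :=
  Finsupp.liftAddHom fun j =>
    (Finsupp.singleAddHom (j - 1)).comp (j • AddMonoidHom.id Octonion)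

/-- `y`, viewed as a degree-zero element of `T = 𝕆[y][x; id, d/dy]`. -/
noncomputable def yT : OrePoly := Finsupp.single 0 Yv
-- Basic Octonion scalar lemmas
lemma Octonion.rsmul_one_mul (r : ℝ) (c : Octonion) : (r • (1:Octonion)) * c = r • c := by
  show Octonion.omul (r • ((1,0) : Quaternion ℝ × Quaternion ℝ)) c = r • c
  unfold Octonion.omul
  refine Prod.ext ?_ ?_ <;>
    (simp [Prod.smul_def, smul_mul_assoc, mul_smul_comm]; rfl)

lemma Octonion.mul_rsmul_one (r : ℝ) (c : Octonion) : c * (r • (1:Octonion)) = r • c := by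
  show Octonion.omul c (r • ((1,0) : Quaternion ℝ × Quaternion ℝ)) = r • c
  unfold Octonion.omul
  refine Prod.ext ?_ ?_ <;>
    (simp [Prod.smul_def, smul_mul_assoc, mul_smul_comm]; rfl)

lemma Octonion.real_mul_comm {c : Octonion} (h : Octonion.IsReal c) (x : Octonion) :
    c * x = x * c := by
  obtain ⟨r, rfl⟩ := h
  rw [Octonion.rsmul_one_mul, Octonion.mul_rsmul_one]

lemma Octonion.smul_ne_zero' {r : ℝ} {c : Octonion} (hr : r ≠ 0) (hc : c ≠ 0) :
    r • c ≠ 0 := by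
  intro h
  apply hc
  have : (r⁻¹ : ℝ) • (r • c) = r⁻¹ • (0 : Octonion) := by rw [h]
  simpa [smul_smul, inv_mul_cancel₀ hr] using this
lemma OctPoly.mul_def (p q : OctPoly) :
    p * q = p.sum fun i a => q.sum fun j b => Finsupp.single (i + j) (a * b) := rfl

lemma OctPoly.mul_apply (p q : OctPoly) (k : ℕ) :
    (p * q) k = p.sum fun i a => q.sum fun j b => if i + j = k then a * b else 0 := by
  rw [OctPoly.mul_def]
  rw [Finsupp.sum_apply]
  refine Finsupp.sum_congr fun i _ => ?_
  rw [Finsupp.sum_apply]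
  refine Finsupp.sum_congr fun j _ => ?_
  rw [Finsupp.single_apply]

lemma OctPoly.mul_apply_top {p q : OctPoly} {d e : ℕ}
    (hp : ∀ i, d < i → p i = 0) (hq : ∀ j, e < j → q j = 0) :
    (p * q) (d + e) = p d * q e := by
  rw [OctPoly.mul_apply]
  rw [Finsupp.sum_eq_single d ?_ ?_]
  · rw [Finsupp.sum_eq_single e ?_ ?_]
    · simp
    · intro j hj hje
      have hjle : j ≤ e := by
        by_contra hc; exact hj (hq j (lt_of_not_ge hc))
      have : d + j ≠ d + e := fun h => hje (by omega)
      simp [this, hje]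
    · simp
  · intro i hi hid
    have hile : i < d := by
      rcases lt_or_ge d i with h | h
      · exact absurd (hp i h) hi
      · exact lt_of_le_of_ne h hid
    apply Finset.sum_eq_zero
    intro j hj
    have hjle : j ≤ e := by
      by_contra hc
      exact (Finsupp.mem_support_iff.mp hj) (hq j (lt_of_not_ge hc))
    have : i + j ≠ d + e := by omega
    simp [this]
  · intro _; apply Finset.sum_eq_zero; intro j _; simp

lemma OctPoly.mul_apply_high {p q : OctPoly} {d e k : ℕ}
    (hp : ∀ i, d < i → p i = 0) (hq : ∀ j, e < j → q j = 0) (hk : d + e < k) :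
    (p * q) k = 0 := by
  rw [OctPoly.mul_apply]
  apply Finset.sum_eq_zero
  intro i hi
  apply Finset.sum_eq_zero
  intro j hj
  have h1 : i ≤ d := by
    by_contra hc; exact (Finsupp.mem_support_iff.mp hi) (hp i (lt_of_not_ge hc))
  have h2 : j ≤ e := by
    by_contra hc; exact (Finsupp.mem_support_iff.mp hj) (hq j (lt_of_not_ge hc))
  have : i + j ≠ k := by omega
  simp [this]

lemma OctPoly.nsmul_apply (n : ℕ) (p : OctPoly) (k : ℕ) : (n • p) k = n • (p k) :=
  (Finsupp.applyAddHom (M := Octonion) k).map_nsmul n p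

lemma derivR_apply (p : OctPoly) (k : ℕ) : derivR p k = (k + 1) • p (k + 1) := by
  have h1 : derivR p = p.sum fun j c => Finsupp.single (j - 1) (j • c) := by
    rw [derivR, Finsupp.liftAddHom_apply]
    rfl
  rw [h1, Finsupp.sum_apply]
  rw [Finsupp.sum_eq_single (k + 1) ?_ ?_]
  · simp
  · intro j hj hjk
    rcases Nat.eq_zero_or_pos j with h | h
    · simp [h]
    · have : j - 1 ≠ k := by omega
      simp [Finsupp.single_apply, this]
  · simp
lemma OctPoly.zero_mul (q : OctPoly) : (0 : OctPoly) * q = 0 := by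
  show (Finsupp.sum 0 fun i a => Finsupp.sum q fun j b => Finsupp.single (i + j) (a * b)) = 0
  simp

lemma OctPoly.mul_add' (p q r : OctPoly) : p * (q + r) = p * q + p * r := by
  rw [OctPoly.mul_def, OctPoly.mul_def, OctPoly.mul_def, ← Finsupp.sum_add]
  refine Finsupp.sum_congr fun i _ => ?_
  rw [Finsupp.sum_add_index'] <;> simp [mul_add]

lemma OctPoly.mul_nsmul' (p q : OctPoly) (k : ℕ) : p * (k • q) = k • (p * q) := by
  induction k with
  | zero => simpa using OctPoly.mul_zero p
  | succ k ih => rw [succ_nsmul, succ_nsmul, OctPoly.mul_add', ih]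

lemma OctPoly.real_comm {p : OctPoly} (h : ∀ i, Octonion.IsReal (p i)) (q : OctPoly) :
    p * q = q * p := by
  rw [OctPoly.mul_def, OctPoly.mul_def, Finsupp.sum_comm]
  refine Finsupp.sum_congr fun j _ => ?_
  refine Finsupp.sum_congr fun i hi => ?_
  rw [add_comm j i, Octonion.real_mul_comm (h i)]

lemma OctPoly.nsmul_eq_zero {k : ℕ} {p : OctPoly} (hk : k ≠ 0) (h : k • p = 0) : p = 0 := by
  ext j
  have h1 : (k • p) j = 0 := by rw [h]; rfl
  rw [OctPoly.nsmul_apply, ← Nat.cast_smul_eq_nsmul ℝ] at h1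
  by_contra hc
  exact Octonion.smul_ne_zero' (by exact_mod_cast hk) hc h1

lemma max_facts {M : Type*} [Zero M] {p : ℕ →₀ M} {N : ℕ}
    (h : p.support.max = (N : WithBot ℕ)) : p N ≠ 0 ∧ ∀ j, N < j → p j = 0 := by
  constructor
  · exact Finsupp.mem_support_iff.mp (Finset.mem_of_max h)
  · intro j hj
    by_contra hc
    have h2 := Finset.le_max (Finsupp.mem_support_iff.mpr hc)
    rw [h] at h2
    exact absurd (WithBot.coe_le_coe.mp h2) (not_le.mpr hj)

lemma degy_facts {p : OctPoly} (hp : p ≠ 0) :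
    p (degy p) ≠ 0 ∧ ∀ j, degy p < j → p j = 0 := by
  obtain ⟨D, hD⟩ := Finset.max_of_nonempty (Finsupp.support_nonempty_iff.mpr hp)
  have hd : degy p = D := by rw [degy, hD, WithBot.unbotD_coe]
  rw [hd]; exact max_facts hD

lemma derivR_high {p : OctPoly} {e : ℕ} (hp : ∀ j, e < j → p j = 0) :
    ∀ k, e ≤ k → derivR p k = 0 := by
  intro k hk
  rw [derivR_apply, hp (k + 1) (by omega), smul_zero]

lemma xmul_apply_succ (σ δ : OctPoly →+ OctPoly) (p : OrePoly) (k : ℕ) :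
    xmul σ δ p (k + 1) = σ (p k) + δ (p (k + 1)) := by
  have h1 : xmul σ δ p = p.sum fun j r =>
      Finsupp.single (j + 1) (σ r) + Finsupp.single j (δ r) := by
    rw [xmul, Finsupp.liftAddHom_apply]
    rfl
  rw [h1, Finsupp.sum_apply]
  have h2 : (p.sum fun j r => (Finsupp.single (j + 1) (σ r)) (k + 1)
      + (Finsupp.single j (δ r)) (k + 1))
      = (p.sum fun j r => (Finsupp.single (j + 1) (σ r)) (k + 1))
      + (p.sum fun j r => (Finsupp.single j (δ r)) (k + 1)) := Finsupp.sum_add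
  rw [show (p.sum fun j r => (Finsupp.single (j + 1) (σ r)
      + Finsupp.single j (δ r)) (k + 1)) = _ from rfl] at *
  calc (p.sum fun j r => (Finsupp.single (j + 1) (σ r)) (k + 1)
          + (Finsupp.single j (δ r)) (k + 1))
      = _ + _ := h2
    _ = σ (p k) + δ (p (k + 1)) := by
        congr 1
        · rw [Finsupp.sum_eq_single k]
          · simp
          · intro j hj hjk
            rw [Finsupp.single_apply, if_neg (by omega)]
          · simp
        · rw [Finsupp.sum_eq_single (k + 1)]
          · simp
          · intro j hj hjk
            rw [Finsupp.single_apply, if_neg (by omega)]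
          · simp

lemma xmul_apply_zero (σ δ : OctPoly →+ OctPoly) (p : OrePoly) :
    xmul σ δ p 0 = δ (p 0) := by
  have h1 : xmul σ δ p = p.sum fun j r =>
      Finsupp.single (j + 1) (σ r) + Finsupp.single j (δ r) := by
    rw [xmul, Finsupp.liftAddHom_apply]
    rfl
  rw [h1, Finsupp.sum_apply]
  calc (p.sum fun j r => (Finsupp.single (j + 1) (σ r)
          + Finsupp.single j (δ r)) 0)
      = (p.sum fun j r => (Finsupp.single (j + 1) (σ r)) 0)
      + (p.sum fun j r => (Finsupp.single j (δ r)) 0) := Finsupp.sum_add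
    _ = 0 + δ (p 0) := by
        congr 1
        · apply Finset.sum_eq_zero
          intro j _
          simp [Finsupp.single_apply]
        · rw [Finsupp.sum_eq_single 0]
          · simp
          · intro j hj hjk
            rw [Finsupp.single_apply, if_neg (by omega)]
          · simp
    _ = δ (p 0) := zero_add _

lemma X_apply_succ (p : OrePoly) (k : ℕ) :
    xmul idR derivR p (k + 1) = p k + derivR (p (k + 1)) := by
  rw [xmul_apply_succ]; rfl

lemma X_high {q : OrePoly} {N : ℕ} (hq : ∀ j, N < j → q j = 0) :
    ∀ i j, N + i < j → ((xmul idR derivR)^[i] q) j = 0 := by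
  intro i
  induction i with
  | zero => intro j hj; exact hq j (by omega)
  | succ i ih =>
    intro j hj
    obtain ⟨j', rfl⟩ : ∃ j', j = j' + 1 := ⟨j - 1, by omega⟩
    rw [Function.iterate_succ_apply', X_apply_succ,
      ih j' (by omega), ih (j' + 1) (by omega), map_zero, add_zero]

lemma X_top {q : OrePoly} {N : ℕ} (hq : ∀ j, N < j → q j = 0) :
    ∀ i, ((xmul idR derivR)^[i] q) (N + i) = q N := by
  intro i
  induction i with
  | zero => rfl
  | succ i ih =>
    rw [show N + (i + 1) = (N + i) + 1 from rfl, Function.iterate_succ_apply',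
      X_apply_succ, ih, X_high hq i (N + i + 1) (by omega), map_zero, add_zero]

lemma X_sub {q : OrePoly} {N : ℕ} (hq : ∀ j, N < j → q j = 0) :
    ∀ i, ((xmul idR derivR)^[i + 1] q) (N + i)
      = xmul idR derivR q N + i • derivR (q N) := by
  intro i
  induction i with
  | zero => simp
  | succ i ih =>
    rw [show N + (i + 1) = (N + i) + 1 from rfl, Function.iterate_succ_apply',
      X_apply_succ, ih, add_assoc N i 1, X_top hq (i + 1), succ_nsmul, add_assoc]

lemma oreMul_apply (σ δ : OctPoly →+ OctPoly) (p q : OrePoly) (k : ℕ) :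
    oreMul σ δ p q k = p.sum fun i a => a * ((xmul σ δ)^[i] q) k := by
  rw [oreMul, Finsupp.sum_apply]
  refine Finsupp.sum_congr fun i _ => ?_
  rw [Finsupp.mapRange_apply]
lemma Octonion.nsmul_ne_zero {k : ℕ} (hk : k ≠ 0) {c : Octonion} (hc : c ≠ 0) :
    k • c ≠ 0 := fun h => by
  rw [← Nat.cast_smul_eq_nsmul ℝ] at h
  exact Octonion.smul_ne_zero' (Nat.cast_ne_zero.mpr hk) hc h

lemma part2 {α β : OctPoly} {m n : ℕ} (hm : 0 < m) (hα : α ≠ 0) (hβ : β ≠ 0)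
    (hreal : ∀ k, Octonion.IsReal (α k))
    (E : m • (α * derivR β) = n • (β * derivR α)) :
    m * degy β = n * degy α := by
  obtain ⟨hαd, hαhigh⟩ := degy_facts hα
  obtain ⟨hβe, hβhigh⟩ := degy_facts hβ
  obtain ⟨r, hr⟩ := hreal (degy α)
  have hrne : r ≠ 0 := fun h => hαd (by rw [hr, h, zero_smul])
  have Ek : ∀ k, m • ((α * derivR β) k) = n • ((β * derivR α) k) := fun k => by
    rw [← OctPoly.nsmul_apply, ← OctPoly.nsmul_apply, E]
  rcases he' : degy β with _ | e'
  · -- degy β = 0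
    rw [Nat.mul_zero]
    have hδβ : derivR β = 0 := Finsupp.ext fun k => by
      rw [derivR_apply, hβhigh (k + 1) (by rw [he']; omega), smul_zero]; rfl
    have h0 : ∀ k, n • ((β * derivR α) k) = 0 := fun k => by
      rw [← Ek k, hδβ, OctPoly.mul_zero]
      simp
    rcases Nat.eq_zero_or_pos n with rfl | hn
    · simp
    suffices hda : degy α = 0 by rw [hda, Nat.mul_zero]
    by_contra hda
    obtain ⟨d', hd'⟩ : ∃ d', degy α = d' + 1 := ⟨degy α - 1, by omega⟩
    have hβhigh0 : ∀ j, 0 < j → β j = 0 := fun j hj => hβhigh j (by rw [he']; exact hj)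
    have hδαhigh : ∀ j, d' < j → derivR α j = 0 := fun j hj =>
      derivR_high hαhigh j (by rw [hd']; omega)
    have hco := h0 (0 + d')
    rw [OctPoly.mul_apply_top hβhigh0 hδαhigh, derivR_apply] at hco
    have hr' : α (d' + 1) = r • 1 := hd' ▸ hr
    rw [hr', ← Nat.cast_smul_eq_nsmul ℝ (d' + 1), smul_smul,
      Octonion.mul_rsmul_one] at hco
    have hβ0 : β 0 ≠ 0 := he' ▸ hβe
    exact Octonion.nsmul_ne_zero (by omega) (Octonion.smul_ne_zero'
      (mul_ne_zero (Nat.cast_ne_zero.mpr (by omega)) hrne) hβ0) hco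
  · -- degy β = e' + 1
    have hδβhigh : ∀ j, e' < j → derivR β j = 0 := fun j hj =>
      derivR_high hβhigh j (by rw [he']; omega)
    have hβtop : β (e' + 1) ≠ 0 := he' ▸ hβe
    have hco := Ek (degy α + e')
    rcases hd' : degy α with _ | d'
    · -- degy α = 0 : contradiction
      exfalso
      have hδα : derivR α = 0 := Finsupp.ext fun k => by
        rw [derivR_apply, hαhigh (k + 1) (by rw [hd']; omega), smul_zero]; rfl
      rw [OctPoly.mul_apply_top hαhigh hδβhigh, derivR_apply, hδα, OctPoly.mul_zero] at hco
      have hco2 : m • (α (degy α) * ((e' + 1) • β (e' + 1))) = 0 := by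
        rw [hco]; simp
      rw [hr, Octonion.rsmul_one_mul] at hco2
      exact Octonion.nsmul_ne_zero (by omega) (Octonion.smul_ne_zero' hrne
        (Octonion.nsmul_ne_zero (by omega) hβtop)) hco2
    · -- degy α = d' + 1
      rw [hd'] at hco
      have hαhigh' : ∀ i, d' + 1 < i → α i = 0 := fun i hi => hαhigh i (by rw [hd']; omega)
      have hβhigh' : ∀ j, e' + 1 < j → β j = 0 := fun j hj => hβhigh j (by rw [he']; omega)
      have hδαhigh : ∀ j, d' < j → derivR α j = 0 := fun j hj =>
        derivR_high hαhigh j (by rw [hd']; omega)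
      rw [OctPoly.mul_apply_top hαhigh' hδβhigh] at hco
      rw [show d' + 1 + e' = e' + 1 + d' from by omega] at hco
      rw [OctPoly.mul_apply_top hβhigh' hδαhigh, derivR_apply, derivR_apply] at hco
      have hr' : α (d' + 1) = r • 1 := hd' ▸ hr
      rw [hr', ← Nat.cast_smul_eq_nsmul ℝ (e' + 1), ← Nat.cast_smul_eq_nsmul ℝ (d' + 1),
        Octonion.rsmul_one_mul, smul_smul, smul_smul, Octonion.mul_rsmul_one,
        ← Nat.cast_smul_eq_nsmul ℝ m, ← Nat.cast_smul_eq_nsmul ℝ n,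
        smul_smul, smul_smul] at hco
      have hsc : (m : ℝ) * (r * ((e' + 1 : ℕ) : ℝ)) = (n : ℝ) * (((d' + 1 : ℕ) : ℝ) * r) := by
        by_contra hne
        have hz : ((m : ℝ) * (r * ((e' + 1 : ℕ) : ℝ)) - (n : ℝ) * (((d' + 1 : ℕ) : ℝ) * r))
            • β (e' + 1) = 0 := by
          rw [sub_smul, sub_eq_zero]
          convert hco using 2 <;> push_cast <;> ring
        exact Octonion.smul_ne_zero' (sub_ne_zero.mpr hne) hβtop hz
      have hfin : (m : ℝ) * ((e' : ℝ) + 1) = (n : ℝ) * ((d' : ℝ) + 1) := by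
        have h2 : ((m : ℝ) * ((e' : ℝ) + 1)) * r = ((n : ℝ) * ((d' : ℝ) + 1)) * r := by
          push_cast at hsc
          linear_combination hsc
        exact mul_right_cancel₀ hrne h2
      exact_mod_cast hfin
lemma ore_coeff_top {p q : OrePoly} {M N : ℕ}
    (hp2 : ∀ j, M + 1 < j → p j = 0) (hq2 : ∀ j, N < j → q j = 0) :
    oreMul idR derivR p q (N + M)
      = p M * q N + p (M + 1) * (xmul idR derivR q N + M • derivR (q N)) := by
  rw [oreMul_apply]
  rw [Finsupp.sum_of_support_subset p (s := Finset.range (M + 2)) ?_ _ ?_]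
  · rw [show M + 2 = M + 1 + 1 from rfl, Finset.sum_range_succ, Finset.sum_range_succ]
    have h0 : ∑ i ∈ Finset.range M, p i * ((xmul idR derivR)^[i] q) (N + M) = 0 := by
      apply Finset.sum_eq_zero
      intro i hi
      rw [X_high hq2 i (N + M) (by have := Finset.mem_range.mp hi; omega), OctPoly.mul_zero]
    rw [h0, zero_add, X_top hq2 M, X_sub hq2 M]
  · intro i hi
    rw [Finset.mem_range]
    by_contra hc
    exact (Finsupp.mem_support_iff.mp hi) (hp2 i (by omega))
  · intro i _
    exact OctPoly.zero_mul _
lemma ore_coeff_deg0 {p : OrePoly} (hp2 : ∀ j, 0 < j → p j = 0) (q : OrePoly) (k : ℕ) :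
    oreMul idR derivR p q k = p 0 * q k := by
  rw [oreMul_apply]
  rw [Finsupp.sum_of_support_subset p (s := Finset.range 1) ?_ _ ?_]
  · rw [Finset.sum_range_one]
    rfl
  · intro i hi
    rw [Finset.mem_range]
    by_contra hc
    exact (Finsupp.mem_support_iff.mp hi) (hp2 i (by omega))
  · intro i _
    exact OctPoly.zero_mul _

/-- Let `δ = d/dy` on `R = 𝕆[y]` and `T = R[x; id, δ]`.  Suppose `a, b ∈ T`
commute, `a` has `x`-degree `m > 0` with coefficients in `ℝ[y]` and leading
coefficient `a_m`, and `b ≠ 0` has `x`-degree `n` with leading coefficient `b_n`.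
Then `m·a_m·δ(b_n) = n·b_n·δ(a_m)`, and hence `m·deg_y b_n = n·deg_y a_m`, so
`deg_y b_n` is uniquely determined. -/
theorem second_coeff_eq_of_commute
    (a b : OrePoly) (m n : ℕ)
    (hm : a.support.max = (m : WithBot ℕ)) (hmpos : 0 < m)
    (hcoeff : ∀ i j : ℕ, Octonion.IsReal (a i j))
    (hb : b ≠ 0) (hn : b.support.max = (n : WithBot ℕ))
    (hcomm : oreMul idR derivR a b = oreMul idR derivR b a) :
    m • (a m * derivR (b n)) = n • (b n * derivR (a m)) ∧
    m * degy (b n) = n * degy (a m) := by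
  obtain ⟨ham, hahigh⟩ := max_facts hm
  obtain ⟨hbn, hbhigh⟩ := max_facts hn
  obtain ⟨m', rfl⟩ : ∃ m', m = m' + 1 := ⟨m - 1, by omega⟩
  have hareal : ∀ k, Octonion.IsReal (a (m' + 1) k) := fun k => hcoeff (m' + 1) k
  suffices E : (m' + 1) • (a (m' + 1) * derivR (b n)) = n • (b n * derivR (a (m' + 1))) by
    exact ⟨E, part2 (by omega) ham hbn hareal E⟩
  rcases n with _ | n'
  · -- n = 0
    have hC := DFunLike.congr_fun hcomm (0 + m')
    rw [ore_coeff_top hahigh hbhigh, ore_coeff_deg0 hbhigh a (0 + m'), zero_add] at hC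
    rw [xmul_apply_zero] at hC
    rw [OctPoly.mul_add', OctPoly.mul_nsmul'] at hC
    rw [OctPoly.real_comm (fun k => hcoeff m' k) (b 0)] at hC
    have hz := add_eq_left.mp hC
    rw [succ_nsmul, zero_nsmul, add_comm]
    exact hz
  · -- n = n' + 1
    have hC := DFunLike.congr_fun hcomm (n' + 1 + m')
    rw [ore_coeff_top hahigh hbhigh] at hC
    rw [show n' + 1 + m' = m' + 1 + n' from by omega] at hC
    rw [ore_coeff_top hbhigh hahigh] at hC
    rw [X_apply_succ b n', X_apply_succ a m'] at hC
    simp only [OctPoly.mul_add', OctPoly.mul_nsmul'] at hC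
    rw [OctPoly.real_comm (fun k => hcoeff m' k) (b (n' + 1))] at hC
    rw [OctPoly.real_comm (fun k => hcoeff (m' + 1) k) (b n')] at hC
    rw [← sub_eq_zero] at hC ⊢
    rw [succ_nsmul, succ_nsmul]
    abel_nf at hC ⊢
    exact hC
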